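/- arXiv:1806.02375 — 2 statements merged into one kernel-verified Lean document; each statement's English description precedes it below -/
import Mathlib

section
/- The map φ ↦ x(φ) = (sin((M+1)φ))^{M+1} / (sin(φ)·(sin(Mφ))^M) is strictly decreasing (hence injective) on the open interval (0, π/(M+1)), for every positive integer M. -/
open Real

lemma chord_lemma {a b : ℝ} (ha : 0 < a) (hab : a < b) (hb : b ≤ π) :
    a * Real.sin b < b * Real.sin a := by
  have hconc := strictConcaveOn_sin_Icc
  have hbpos : 0 < b := ha.trans hab
  have h0 : (0:ℝ) ∈ Set.Icc 0 π := ⟨le_refl 0, Real.pi_pos.le⟩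
  have hbm : b ∈ Set.Icc 0 π := ⟨hbpos.le, hb⟩
  have hne : (0:ℝ) ≠ b := hbpos.ne
  have ht1 : 0 < 1 - a / b := by
    have : a / b < 1 := (div_lt_one hbpos).mpr hab
    linarith
  have ht2 : 0 < a / b := div_pos ha hbpos
  have h := hconc.2 h0 hbm hne ht1 ht2 (by ring)
  simp only [smul_eq_mul, mul_zero, Real.sin_zero, zero_mul] at h
  have hx : 0 + a / b * b = a := by field_simp; ring
  rw [hx] at h
  have : a / b * Real.sin b < Real.sin a := by linarith
  calc a * Real.sin b = b * (a / b * Real.sin b) := by field_simp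
    _ < b * Real.sin a := by exact (mul_lt_mul_iff_right₀ hbpos).mpr this

lemma key_ineq {a b : ℝ} (ha : 0 < a) (hab : a < b) (hb2 : b < 2 * π)
    (hsa : 0 < Real.sin a) : a * Real.sin b < b * Real.sin a := by
  have hbpos : 0 < b := ha.trans hab
  rcases le_or_gt (Real.sin b) 0 with hsb | hsb
  · have h1 : a * Real.sin b ≤ 0 := mul_nonpos_of_nonneg_of_nonpos ha.le hsb
    have h2 : 0 < b * Real.sin a := mul_pos hbpos hsa
    linarith
  · have hbpi : b ≤ π := by
      by_contra hc
      push_neg at hc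
      have h1 : 0 ≤ Real.sin (b - π) :=
        Real.sin_nonneg_of_nonneg_of_le_pi (by linarith) (by linarith)
      rw [Real.sin_sub_pi] at h1
      linarith
    exact chord_lemma ha hab hbpi

/-- The parametrization `φ ↦ x(φ) = sin((M+1)φ)^(M+1) / (sin φ · sin(Mφ)^M)` is
strictly decreasing (hence injective) on `(0, π/(M+1))`, for every positive integer `M`. -/
theorem x_param_strictAnti (M : ℕ) (hM : 0 < M) :
    StrictAntiOn
      (fun φ : ℝ =>
        (Real.sin (((M : ℝ) + 1) * φ)) ^ (M + 1) /
          (Real.sin φ * (Real.sin ((M : ℝ) * φ)) ^ M))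
      (Set.Ioo 0 (Real.pi / ((M : ℝ) + 1))) := by
  set c : ℝ := (M : ℝ) with hc
  have hc1 : 1 ≤ c := by
    have h : (1:ℕ) ≤ M := hM
    rw [hc]; exact_mod_cast h
  have hc0 : 0 < c := lt_of_lt_of_le one_pos hc1
  have hcp : 0 < c + 1 := by linarith
  set S : Set ℝ := Set.Ioo 0 (π / (c + 1)) with hS
  -- basic positivity facts
  have hfacts : ∀ x ∈ S, 0 < x ∧ (c + 1) * x < π ∧ 0 < Real.sin x ∧
      0 < Real.sin (c * x) ∧ 0 < Real.sin ((c + 1) * x) := by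
    intro x hx
    obtain ⟨hx0, hx1⟩ := hx
    have h1 : (c + 1) * x < π := by
      rw [lt_div_iff₀ hcp] at hx1; linarith [hx1]
    have hxpi : x < π := by nlinarith
    have hcx : c * x < π := by nlinarith
    refine ⟨hx0, h1, Real.sin_pos_of_pos_of_lt_pi hx0 hxpi,
      Real.sin_pos_of_pos_of_lt_pi (by positivity) hcx,
      Real.sin_pos_of_pos_of_lt_pi (by positivity) h1⟩
  have hSconv : Convex ℝ S := convex_Ioo _ _
  -- the two factors
  set g1 : ℝ → ℝ := fun φ => Real.sin ((c + 1) * φ) / Real.sin (c * φ) with hg1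
  set g2 : ℝ → ℝ := fun φ => Real.sin ((c + 1) * φ) / Real.sin φ with hg2
  -- derivatives
  have hd1 : ∀ x ∈ S, HasDerivAt g1
      ((Real.cos ((c + 1) * x) * (c + 1) * Real.sin (c * x) -
        Real.sin ((c + 1) * x) * (Real.cos (c * x) * c)) / (Real.sin (c * x)) ^ 2) x := by
    intro x hx
    obtain ⟨_, _, _, hs2, _⟩ := hfacts x hx
    have h1 : HasDerivAt (fun y : ℝ => Real.sin ((c + 1) * y)) (Real.cos ((c + 1) * x) * (c + 1)) x := by
      simpa [Function.comp_def] using (Real.hasDerivAt_sin ((c + 1) * x)).comp x ((hasDerivAt_id x).const_mul (c + 1))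
    have h2 : HasDerivAt (fun y : ℝ => Real.sin (c * y)) (Real.cos (c * x) * c) x := by
      simpa [Function.comp_def] using (Real.hasDerivAt_sin (c * x)).comp x ((hasDerivAt_id x).const_mul c)
    exact h1.div h2 hs2.ne'
  have hd2 : ∀ x ∈ S, HasDerivAt g2
      ((Real.cos ((c + 1) * x) * (c + 1) * Real.sin x -
        Real.sin ((c + 1) * x) * Real.cos x) / (Real.sin x) ^ 2) x := by
    intro x hx
    obtain ⟨_, _, hs1, _, _⟩ := hfacts x hx
    have h1 : HasDerivAt (fun y : ℝ => Real.sin ((c + 1) * y)) (Real.cos ((c + 1) * x) * (c + 1)) x := by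
      simpa [Function.comp_def] using (Real.hasDerivAt_sin ((c + 1) * x)).comp x ((hasDerivAt_id x).const_mul (c + 1))
    exact h1.div (Real.hasDerivAt_sin x) hs1.ne'
  -- numerator negativity for g1
  have hn1 : ∀ x ∈ S, Real.cos ((c + 1) * x) * (c + 1) * Real.sin (c * x) -
      Real.sin ((c + 1) * x) * (Real.cos (c * x) * c) < 0 := by
    intro x hx
    obtain ⟨hx0, h1, hs1, hs2, hs3⟩ := hfacts x hx
    have key : x * Real.sin ((2 * c + 1) * x) < ((2 * c + 1) * x) * Real.sin x := by
      refine key_ineq hx0 (by nlinarith) (by nlinarith) hs1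
    have key' : Real.sin ((2 * c + 1) * x) < (2 * c + 1) * Real.sin x := by
      have := (mul_lt_mul_iff_right₀ hx0).mp (by linarith [key] : x * Real.sin ((2 * c + 1) * x) < x * ((2 * c + 1) * Real.sin x))
      exact this
    have e1 : Real.sin ((2 * c + 1) * x) =
        Real.sin ((c + 1) * x) * Real.cos (c * x) + Real.cos ((c + 1) * x) * Real.sin (c * x) := by
      rw [show (2 * c + 1) * x = (c + 1) * x + c * x by ring, Real.sin_add]
    have e2 : Real.sin x =
        Real.sin ((c + 1) * x) * Real.cos (c * x) - Real.cos ((c + 1) * x) * Real.sin (c * x) := by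
      have := Real.sin_sub ((c + 1) * x) (c * x)
      rw [show (c + 1) * x - c * x = x by ring] at this
      exact this
    nlinarith [key', e1, e2]
  -- numerator negativity for g2
  have hn2 : ∀ x ∈ S, Real.cos ((c + 1) * x) * (c + 1) * Real.sin x -
      Real.sin ((c + 1) * x) * Real.cos x < 0 := by
    intro x hx
    obtain ⟨hx0, h1, hs1, hs2, hs3⟩ := hfacts x hx
    have key : (c * x) * Real.sin ((c + 2) * x) < ((c + 2) * x) * Real.sin (c * x) := by
      refine key_ineq (by positivity) (by nlinarith) (by nlinarith [Real.pi_pos]) hs2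
    have key' : c * Real.sin ((c + 2) * x) < (c + 2) * Real.sin (c * x) := by
      have h := (mul_lt_mul_iff_right₀ hx0).mp
        (by nlinarith [key] : x * (c * Real.sin ((c + 2) * x)) < x * ((c + 2) * Real.sin (c * x)))
      exact h
    have e1 : Real.sin ((c + 2) * x) =
        Real.sin ((c + 1) * x) * Real.cos x + Real.cos ((c + 1) * x) * Real.sin x := by
      rw [show (c + 2) * x = (c + 1) * x + x by ring, Real.sin_add]
    have e2 : Real.sin (c * x) =
        Real.sin ((c + 1) * x) * Real.cos x - Real.cos ((c + 1) * x) * Real.sin x := by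
      have := Real.sin_sub ((c + 1) * x) x
      rw [show (c + 1) * x - x = c * x by ring] at this
      exact this
    nlinarith [key', e1, e2]
  -- strict antitonicity of factors
  have hcont1 : ContinuousOn g1 S := by
    apply ContinuousOn.div
    · exact (Real.continuous_sin.comp (continuous_const.mul continuous_id)).continuousOn
    · exact (Real.continuous_sin.comp (continuous_const.mul continuous_id)).continuousOn
    · intro x hx; exact (hfacts x hx).2.2.2.1.ne'
  have hcont2 : ContinuousOn g2 S := by
    apply ContinuousOn.div
    · exact (Real.continuous_sin.comp (continuous_const.mul continuous_id)).continuousOn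
    · exact Real.continuous_sin.continuousOn
    · intro x hx; exact (hfacts x hx).2.2.1.ne'
  have hA1 : StrictAntiOn g1 S := by
    apply strictAntiOn_of_deriv_neg hSconv hcont1
    intro x hx
    rw [hS, interior_Ioo] at hx
    rw [(hd1 x hx).deriv]
    have := hn1 x hx
    have hs2 := (hfacts x hx).2.2.2.1
    exact div_neg_of_neg_of_pos this (by positivity)
  have hA2 : StrictAntiOn g2 S := by
    apply strictAntiOn_of_deriv_neg hSconv hcont2
    intro x hx
    rw [hS, interior_Ioo] at hx
    rw [(hd2 x hx).deriv]
    have := hn2 x hx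
    have hs1 := (hfacts x hx).2.2.1
    exact div_neg_of_neg_of_pos this (by positivity)
  -- positivity of factors
  have hp1 : ∀ x ∈ S, 0 < g1 x := by
    intro x hx
    obtain ⟨_, _, _, hs2, hs3⟩ := hfacts x hx
    exact div_pos hs3 hs2
  have hp2 : ∀ x ∈ S, 0 < g2 x := by
    intro x hx
    obtain ⟨_, _, hs1, _, hs3⟩ := hfacts x hx
    exact div_pos hs3 hs1
  -- rewrite the function
  have heq : ∀ x ∈ S, Real.sin ((c + 1) * x) ^ (M + 1) /
      (Real.sin x * Real.sin (c * x) ^ M) = g1 x ^ M * g2 x := by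
    intro x hx
    obtain ⟨_, _, hs1, hs2, hs3⟩ := hfacts x hx
    rw [hg1, hg2]
    simp only
    rw [div_pow]
    field_simp
    ring
  intro a ha b hb hab
  simp only
  rw [heq a ha, heq b hb]
  have h1 : g1 b < g1 a := hA1 ha hb hab
  have h2 : g2 b < g2 a := hA2 ha hb hab
  have hp1b := hp1 b hb
  have hp2b := hp2 b hb
  have hpow : g1 b ^ M < g1 a ^ M := pow_lt_pow_left₀ h1 hp1b.le (by omega)
  have hpowb : 0 < g1 b ^ M := pow_pos hp1b M
  calc g1 b ^ M * g2 b < g1 a ^ M * g2 a := by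
        apply mul_lt_mul hpow h2.le hp2b (pow_nonneg (hp1 a ha).le M)
  _ = g1 a ^ M * g2 a := rfl
end

section
/- Near the origin, the limiting density ρ_M(x) behaves like a constant times x^{−M/(M+1)}: precisely, using the parametrization x(φ), as φ → (π/(M+1))⁻ (so x → 0⁺) one has ρ_M(x)·x^{M/(M+1)} converges to a finite positive constant depending only on M. -/
open Real Filter Topology

/-- Near the origin the density blows up like `x^{-M/(M+1)}`: with
`x(φ) = sin((M+1)φ)^(M+1) / (sin φ · sin(Mφ)^M)` and
`ρ(φ) = (1/(π x(φ))) · (sin((M+1)φ)/sin(Mφ)) · sin φ`, as `φ → (π/(M+1))⁻`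
(so `x → 0⁺`) the product `ρ(φ) · x(φ)^{M/(M+1)}` converges to a finite positive
constant depending only on `M`. -/
theorem density_blowup_rate (M : ℕ) (hM : 0 < M) :
    ∃ c : ℝ, 0 < c ∧
      Tendsto
        (fun φ : ℝ =>
          (let x := (Real.sin (((M : ℝ) + 1) * φ)) ^ (M + 1) /
              (Real.sin φ * (Real.sin ((M : ℝ) * φ)) ^ M);
           (1 / (Real.pi * x)) *
              (Real.sin (((M : ℝ) + 1) * φ) / Real.sin ((M : ℝ) * φ)) * Real.sin φ *
            x ^ ((M : ℝ) / ((M : ℝ) + 1))))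
        (nhdsWithin (Real.pi / ((M : ℝ) + 1)) (Set.Iio (Real.pi / ((M : ℝ) + 1))))
        (nhds c) := by
  set a : ℝ := Real.pi / ((M : ℝ) + 1) with ha
  have hM1 : (1 : ℝ) ≤ (M : ℝ) := by exact_mod_cast hM
  have ha0 : 0 < a := by positivity
  have haπ : a < Real.pi := by
    rw [ha, div_lt_iff₀ (by linarith)]
    nlinarith [Real.pi_pos]
  have hsa : 0 < Real.sin a := Real.sin_pos_of_pos_of_lt_pi ha0 haπ
  have hMa : (M : ℝ) * a = Real.pi - a := by
    rw [ha]; field_simp; ring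
  have hsMa : Real.sin ((M : ℝ) * a) = Real.sin a := by rw [hMa, Real.sin_pi_sub]
  set g : ℝ → ℝ := fun φ =>
    Real.sin φ * (Real.sin φ * Real.sin ((M : ℝ) * φ) ^ M) ^ ((1 : ℝ) / ((M : ℝ) + 1)) /
      (Real.pi * Real.sin ((M : ℝ) * φ)) with hg
  have hga : 0 < g a := by
    rw [hg]
    have hD : 0 < Real.sin a * Real.sin ((M : ℝ) * a) ^ M := by
      rw [hsMa]; positivity
    exact div_pos (mul_pos hsa (Real.rpow_pos_of_pos hD _))
      (by rw [hsMa]; positivity)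
  refine ⟨g a, hga, ?_⟩
  have hcont : ContinuousAt g a := by
    rw [hg]
    apply ContinuousAt.div
    · apply ContinuousAt.mul Real.continuous_sin.continuousAt
      apply ContinuousAt.rpow_const (by fun_prop)
      left
      rw [hsMa]; positivity
    · fun_prop
    · rw [hsMa]; positivity
  have hT : Tendsto g (nhdsWithin a (Set.Iio a)) (nhds (g a)) :=
    hcont.continuousWithinAt.tendsto
  refine hT.congr' ?_
  have hmem : Set.Ioo 0 a ∈ nhdsWithin a (Set.Iio a) :=
    Ioo_mem_nhdsLT_of_mem ⟨ha0, le_refl a⟩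
  filter_upwards [hmem] with φ hφ
  obtain ⟨hφ0, hφa⟩ := hφ
  have hp : 0 < Real.sin φ := Real.sin_pos_of_pos_of_lt_pi hφ0 (lt_trans hφa haπ)
  have hs : 0 < Real.sin (((M : ℝ) + 1) * φ) := by
    apply Real.sin_pos_of_pos_of_lt_pi (by positivity)
    calc ((M : ℝ) + 1) * φ < ((M : ℝ) + 1) * a := by
          apply mul_lt_mul_of_pos_left hφa; linarith
      _ = Real.pi := by rw [ha]; field_simp
  have hq : 0 < Real.sin ((M : ℝ) * φ) := by
    apply Real.sin_pos_of_pos_of_lt_pi (by positivity)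
    calc (M : ℝ) * φ < (M : ℝ) * a := by
          apply mul_lt_mul_of_pos_left hφa; linarith
      _ = Real.pi - a := hMa
      _ < Real.pi := by linarith
  set s := Real.sin (((M : ℝ) + 1) * φ)
  set p := Real.sin φ
  set q := Real.sin ((M : ℝ) * φ)
  have hD : 0 < p * q ^ M := by positivity
  set x : ℝ := s ^ (M + 1) / (p * q ^ M) with hx
  have hx0 : 0 < x := by positivity
  show g φ = (1 / (Real.pi * x)) * (s / q) * p * x ^ ((M : ℝ) / ((M : ℝ) + 1))
  have h1 : x ^ ((M : ℝ) / ((M : ℝ) + 1)) * x ^ ((1 : ℝ) / ((M : ℝ) + 1)) = x := by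
    rw [← Real.rpow_add hx0]
    rw [← add_div, div_self (by linarith), Real.rpow_one]
  have h2 : x ^ ((1 : ℝ) / ((M : ℝ) + 1)) =
      s / (p * q ^ M) ^ ((1 : ℝ) / ((M : ℝ) + 1)) := by
    rw [hx, Real.div_rpow (by positivity) hD.le]
    congr 1
    rw [← Real.rpow_natCast s (M + 1), ← Real.rpow_mul hs.le]
    push_cast
    rw [mul_one_div, div_self (by linarith), Real.rpow_one]
  set E := (p * q ^ M) ^ ((1 : ℝ) / ((M : ℝ) + 1)) with hE
  have hE0 : 0 < E := Real.rpow_pos_of_pos hD _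
  have h3 : x ^ ((M : ℝ) / ((M : ℝ) + 1)) = x * E / s := by
    rw [h2] at h1
    field_simp at h1 ⊢
    linarith [h1]
  rw [h3, hg]
  clear_value x E
  field_simp
  rw [hE]
  ring_nf
  change p * (p * q ^ M) ^ (1 + (M:ℝ))⁻¹ * q * q⁻¹ = p * (q ^ M * p) ^ (1 + (M:ℝ))⁻¹
  rw [mul_comm p (q ^ M), mul_assoc, mul_inv_cancel₀ hq.ne', mul_one]
end
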